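/- Let B be the localization at powers of x of the quantum Weyl algebra k⟨x, Y | Yx = pq·xY + 1⟩ (with pq not a root of unity), and let M = B/B·Y with basis v_k = x^k + BY for k ∈ ℤ. Then M is a simple B-module: the action satisfies x^i v_k = v_{k+i}, Y·v_k = p^{k-1}[k]_{p,q} v_{k-1} for k ≥ 1, Y·v_0 = 0, Y·v_k = -p^{k+1}q^{-1}[-k]_{p,q} v_{k-1} for k ≤ -1, and every nonzero submodule equals M. -/

import Mathlib

/-- The (p,q)-number `[n]_{p,q} = Σ_{i=0}^{n-1} q^i p^{-(n-i)}`. -/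
def pqNum {k : Type*} [Field k] (p q : k) (n : ℕ) : k :=
  ∑ i ∈ Finset.range n, q ^ i * p⁻¹ ^ (n - i)

lemma pow_inj_aux {k : Type*} [Field k] {a : k} (ha : a ≠ 0)
    (h : ∀ m : ℕ, 0 < m → a ^ m ≠ 1) {i j : ℕ} (hij : a ^ i = a ^ j) : i = j := by
  rcases lt_trichotomy i j with hlt | heq | hlt
  · exfalso
    have : a ^ i * a ^ (j - i) = a ^ i * 1 := by
      rw [← pow_add, Nat.add_sub_cancel' hlt.le, mul_one, hij]
    exact h (j - i) (by omega) (mul_left_cancel₀ (pow_ne_zero _ ha) this)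
  · exact heq
  · exfalso
    have : a ^ j * a ^ (i - j) = a ^ j * 1 := by
      rw [← pow_add, Nat.add_sub_cancel' hlt.le, mul_one, hij]
    exact (h (i - j) (by omega) (mul_left_cancel₀ (pow_ne_zero _ ha) this))

lemma pqNum_geom {k : Type*} [Field k] {p q : k} (hp : p ≠ 0) (n : ℕ) :
    (p * q - 1) * (p ^ n * pqNum p q n) = (p * q) ^ n - 1 := by
  have h1 : p ^ n * pqNum p q n = ∑ i ∈ Finset.range n, (p * q) ^ i := by
    rw [pqNum, Finset.mul_sum]
    refine Finset.sum_congr rfl fun i hi => ?_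
    have hi' : i ≤ n := (Finset.mem_range.mp hi).le
    have hpn : p ^ n = p ^ i * p ^ (n - i) := by rw [← pow_add, Nat.add_sub_cancel' hi']
    rw [hpn, inv_pow, mul_pow]
    field_simp
  rw [h1, mul_comm, geom_sum_mul]

/-- Let `B` be the localization at powers of `x` of the quantum Weyl algebra
`k⟨x, Y | Yx = pq·xY + 1⟩`, with `pq` (and `p`) not a root of unity, and let
`M = B/B·Y`, with basis `v_k = x^k + BY` (`k ∈ ℤ`), on which
`x^i v_k = v_{k+i}`, `Y v_k = p^{k-1}[k]_{p,q} v_{k-1}` for `k ≥ 1`, `Y v_0 = 0`,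
and `Y v_k = -p^{k+1} q⁻¹ [-k]_{p,q} v_{k-1}` for `k ≤ -1`.
Then `M` is a simple `B`-module: every nonzero subspace invariant under the action
of `x`, `x⁻¹` and `Y` is all of `M`. -/
theorem quantum_weyl_module_simple {k M : Type*} [Field k]
    [AddCommGroup M] [Module k M]
    (p q : k) (hp : p ≠ 0) (hq : q ≠ 0)
    (hpq : ∀ m : ℕ, 0 < m → (p * q) ^ m ≠ 1)
    (hp' : ∀ m : ℕ, 0 < m → p ^ m ≠ 1)
    (v : ℤ → M) (hind : LinearIndependent k v)
    (hspan : Submodule.span k (Set.range v) = ⊤)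
    (Xop Xinv Yop : M →ₗ[k] M)
    (hX : ∀ j : ℤ, Xop (v j) = v (j + 1))
    (hXinv : ∀ j : ℤ, Xinv (v j) = v (j - 1))
    (hYpos : ∀ j : ℤ, 1 ≤ j → Yop (v j) = (p ^ (j - 1) * pqNum p q j.toNat) • v (j - 1))
    (hY0 : Yop (v 0) = 0)
    (hYneg : ∀ j : ℤ, j ≤ -1 →
      Yop (v j) = (-(p ^ (j + 1) * q⁻¹ * pqNum p q (-j).toNat)) • v (j - 1)) :
    ∀ N : Submodule k M,
      (∀ m ∈ N, Xop m ∈ N ∧ Xinv m ∈ N ∧ Yop m ∈ N) → N ≠ ⊥ → N = ⊤ := by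
  intro N hN hNbot
  set c : ℤ → k := fun j => p ^ (j - 1) * pqNum p q j.toNat with hc
  have hu0 : p * q ≠ 0 := mul_ne_zero hp hq
  -- action of Xop ∘ Yop on basis vectors with nonneg index
  have hT : ∀ j : ℤ, 0 ≤ j → Xop (Yop (v j)) = c j • v j := by
    intro j hj
    rcases eq_or_lt_of_le hj with h0 | h1
    · rw [← h0, hY0, map_zero]
      have : c 0 = 0 := by simp [hc, pqNum]
      rw [this, zero_smul]
    · have h1 : 1 ≤ j := h1
      rw [hYpos j h1, map_smul, hX]
      simp [hc]
  -- injectivity of eigenvalues on nonneg indices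
  have hckey : ∀ l : ℤ, 0 ≤ l → (p * q - 1) * (p * c l) = (p * q) ^ l.toNat - 1 := by
    intro l hl
    have hpl : p * c l = p ^ l.toNat * pqNum p q l.toNat := by
      have h1 : p * p ^ (l - 1) = p ^ l := by
        rw [zpow_sub_one₀ hp]
        field_simp
      have h2 : (p : k) ^ l = p ^ l.toNat := by
        rw [← Int.toNat_of_nonneg hl, zpow_natCast]
        simp [Int.toNat_of_nonneg hl]
      rw [hc]
      calc p * (p ^ (l - 1) * pqNum p q l.toNat)
          = (p * p ^ (l - 1)) * pqNum p q l.toNat := by ring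
        _ = p ^ l.toNat * pqNum p q l.toNat := by rw [h1, h2]
    rw [hpl, pqNum_geom hp]
  have hcinj : ∀ i j : ℤ, 0 ≤ i → 0 ≤ j → c i = c j → i = j := by
    intro i j hi hj h
    have e1 := hckey i hi
    have e2 := hckey j hj
    rw [h] at e1
    have : (p * q) ^ i.toNat = (p * q) ^ j.toNat := by
      have h3 := e1.symm.trans e2
      linear_combination h3
    have := pow_inj_aux hu0 hpq this
    omega
  -- iterated Xop and Xinv
  have hXpow_apply : ∀ t : ℕ, ∀ j : ℤ, (Xop ^ t) (v j) = v (j + t) := by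
    intro t
    induction t with
    | zero => intro j; simp
    | succ t ih =>
      intro j
      rw [pow_succ', Module.End.mul_apply, ih, hX]
      congr 1
      push_cast
      ring
  have hXinv_apply : ∀ t : ℕ, ∀ j : ℤ, (Xinv ^ t) (v j) = v (j - t) := by
    intro t
    induction t with
    | zero => intro j; simp
    | succ t ih =>
      intro j
      rw [pow_succ', Module.End.mul_apply, ih, hXinv]
      congr 1
      push_cast
      ring
  have hXpow_mem : ∀ t : ℕ, ∀ m ∈ N, (Xop ^ t) m ∈ N := by
    intro t
    induction t with
    | zero => intro m hm; simpa using hm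
    | succ t ih =>
      intro m hm
      rw [pow_succ', Module.End.mul_apply]
      exact (hN _ (ih m hm)).1
  have hXinv_mem : ∀ t : ℕ, ∀ m ∈ N, (Xinv ^ t) m ∈ N := by
    intro t
    induction t with
    | zero => intro m hm; simpa using hm
    | succ t ih =>
      intro m hm
      rw [pow_succ', Module.End.mul_apply]
      exact (hN _ (ih m hm)).2.1
  -- key induction: a nonzero combination supported on positive indices in N gives some v i ∈ N
  have key : ∀ n : ℕ, ∀ s : Finset ℤ, s.card = n → (∀ j ∈ s, 1 ≤ j) →
      ∀ a : ℤ → k, (∑ j ∈ s, a j • v j) ∈ N → (∃ j ∈ s, a j ≠ 0) → ∃ i : ℤ, v i ∈ N := by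
    intro n
    induction n using Nat.strong_induction_on with
    | _ n ih =>
      rintro s hcard hpos a hmem ⟨j0, hj0s, hj0⟩
      have hTw : Xop (Yop (∑ j ∈ s, a j • v j)) ∈ N := (hN _ ((hN _ hmem).2.2)).1
      have h1 : Xop (Yop (∑ j ∈ s, a j • v j)) = ∑ j ∈ s, ((c j) * a j) • v j := by
        rw [map_sum, map_sum]
        refine Finset.sum_congr rfl fun j hj => ?_
        rw [map_smul, map_smul, hT j (by linarith [hpos j hj]), smul_smul, mul_comm (a j)]
      have hw' : (∑ j ∈ s, ((c j - c j0) * a j) • v j) ∈ N := by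
        have h2 : (∑ j ∈ s, ((c j - c j0) * a j) • v j)
            = Xop (Yop (∑ j ∈ s, a j • v j)) - c j0 • (∑ j ∈ s, a j • v j) := by
          rw [h1, Finset.smul_sum, ← Finset.sum_sub_distrib]
          refine Finset.sum_congr rfl fun j hj => ?_
          rw [smul_smul, ← sub_smul]
          ring_nf
        rw [h2]
        exact N.sub_mem hTw (N.smul_mem _ hmem)
      by_cases hz : ∃ j ∈ s.erase j0, (c j - c j0) * a j ≠ 0
      · obtain ⟨j1, hj1, hj1ne⟩ := hz
        have hmem' : (∑ j ∈ s.erase j0, ((c j - c j0) * a j) • v j) ∈ N := by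
          rwa [Finset.sum_erase _ (by rw [sub_self, zero_mul, zero_smul])]
        exact ih (s.erase j0).card
          (by rw [← hcard]; exact Finset.card_erase_lt_of_mem hj0s) _ rfl
          (fun j hj => hpos j (Finset.mem_of_mem_erase hj)) _ hmem' ⟨j1, hj1, hj1ne⟩
      · push_neg at hz
        have haz : ∀ j ∈ s, j ≠ j0 → a j = 0 := by
          intro j hj hne
          have h0 := hz j (Finset.mem_erase.mpr ⟨hne, hj⟩)
          have hcne : c j - c j0 ≠ 0 := sub_ne_zero.mpr
            (fun h => hne (hcinj j j0 (by linarith [hpos j hj]) (by linarith [hpos j0 hj0s]) h))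
          rcases mul_eq_zero.mp h0 with h | h
          · exact absurd h hcne
          · exact h
        have hw : (∑ j ∈ s, a j • v j) = a j0 • v j0 :=
          Finset.sum_eq_single_of_mem j0 hj0s (fun b hb hne => by rw [haz b hb hne, zero_smul])
        refine ⟨j0, ?_⟩
        have := N.smul_mem (a j0)⁻¹ hmem
        rwa [hw, smul_smul, inv_mul_cancel₀ hj0, one_smul] at this
  -- get a nonzero element and a finite representation
  obtain ⟨n0, hn0N, hn0⟩ := Submodule.exists_mem_ne_zero_of_ne_bot hNbot
  have hn0span : n0 ∈ Submodule.span k (Set.range v) := by rw [hspan]; trivial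
  obtain ⟨cf, hcf⟩ := (Finsupp.mem_span_range_iff_exists_finsupp).mp hn0span
  have hsum : ∑ j ∈ cf.support, cf j • v j = n0 := by
    rw [← hcf]; rfl
  set s : Finset ℤ := cf.support with hs
  set t : ℕ := s.sup fun j => (1 - j).toNat with ht
  have hshift : (∑ j ∈ s, cf j • v (j + t)) ∈ N := by
    have hmem := hXpow_mem t n0 hn0N
    rw [← hsum, map_sum] at hmem
    convert hmem using 2 with j
    rw [map_smul, hXpow_apply]
  have hmem2 : (∑ j ∈ s.image (· + (t : ℤ)), cf (j - t) • v j) ∈ N := by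
    rw [Finset.sum_image (by intro x _ y _ h; have h' : x + (t : ℤ) = y + t := h; omega)]
    simpa using hshift
  have hpos : ∀ j ∈ s.image (· + (t : ℤ)), 1 ≤ j := by
    intro j hj
    obtain ⟨x, hx, rfl⟩ := Finset.mem_image.mp hj
    have : (1 - x).toNat ≤ t := Finset.le_sup (f := fun j => (1 - j).toNat) hx
    omega
  have hex : ∃ j ∈ s.image (· + (t : ℤ)), cf (j - t) ≠ 0 := by
    have hne : s.Nonempty := by
      rw [hs]
      refine Finsupp.support_nonempty_iff.mpr ?_
      rintro rfl
      simp at hsum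
      exact hn0 hsum.symm
    obtain ⟨x, hx⟩ := hne
    refine ⟨x + t, Finset.mem_image_of_mem _ hx, by simpa using Finsupp.mem_support_iff.mp hx⟩
  obtain ⟨i, hi⟩ := key _ _ rfl hpos _ hmem2 hex
  have hall : ∀ m : ℤ, v m ∈ N := by
    intro m
    rcases le_total i m with h | h
    · have := hXpow_mem (m - i).toNat _ hi
      rwa [hXpow_apply, show i + ((m - i).toNat : ℤ) = m by omega] at this
    · have := hXinv_mem (i - m).toNat _ hi
      rwa [hXinv_apply, show i - ((i - m).toNat : ℤ) = m by omega] at this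
  rw [eq_top_iff, ← hspan, Submodule.span_le]
  rintro _ ⟨m, rfl⟩
  exact hall m
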